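/- Let G and H be connected graphs with G ≠ K_1, and let G∘H be their corona product. Then for every automorphism f of G∘H, f maps the copy of G in G∘H onto itself (and its restriction is an automorphism of G), and f permutes the copies of H, restricting to isomorphisms between copies of H. -/

import Mathlib

open SimpleGraph

/-- Two edges (as unordered pairs) are adjacent if they are distinct and share an endpoint. -/
def EdgesAdj {V : Type*} (e f : Sym2 V) : Prop := e ≠ f ∧ ∃ v, v ∈ e ∧ v ∈ f

/-- A proper edge labeling: adjacent edges of `G` receive different labels. -/
def IsProperEdgeLabeling {V : Type*} (G : SimpleGraph V) (c : Sym2 V → ℕ) : Prop :=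
  ∀ e ∈ G.edgeSet, ∀ f ∈ G.edgeSet, EdgesAdj e f → c e ≠ c f

/-- An automorphism `φ` of `G` preserves the edge labeling `c`. -/
def PreservesEdgeLabeling {V : Type*} (G : SimpleGraph V) (φ : G ≃g G) (c : Sym2 V → ℕ) : Prop :=
  ∀ e ∈ G.edgeSet, c (Sym2.map φ e) = c e

/-- A distinguishing edge labeling: only the identity automorphism preserves it. -/
def IsDistinguishingEdgeLabeling {V : Type*} (G : SimpleGraph V) (c : Sym2 V → ℕ) : Prop :=
  ∀ φ : G ≃g G, PreservesEdgeLabeling G φ c → ∀ v, φ v = v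

/-- The chromatic index `χ'(G)`. -/
noncomputable def chromIndex {V : Type*} (G : SimpleGraph V) : ℕ :=
  sInf {d | ∃ c : Sym2 V → ℕ, IsProperEdgeLabeling G c ∧ ∀ e ∈ G.edgeSet, c e < d}

/-- The distinguishing index `D'(G)`. -/
noncomputable def distIndex {V : Type*} (G : SimpleGraph V) : ℕ :=
  sInf {d | ∃ c : Sym2 V → ℕ, IsDistinguishingEdgeLabeling G c ∧ ∀ e ∈ G.edgeSet, c e < d}

/-- The distinguishing chromatic index `χ'_D(G)`. -/
noncomputable def distChromIndex {V : Type*} (G : SimpleGraph V) : ℕ :=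
  sInf {d | ∃ c : Sym2 V → ℕ, IsProperEdgeLabeling G c ∧ IsDistinguishingEdgeLabeling G c ∧
      ∀ e ∈ G.edgeSet, c e < d}

/-- The corona product `G ∘ H`: one copy of `G` and, for each vertex `i` of `G`, a copy of `H`
whose vertices are all joined to `i`. -/
def coronaProd {α β : Type*} (G : SimpleGraph α) (H : SimpleGraph β) :
    SimpleGraph (α ⊕ α × β) where
  Adj x y :=
    Sum.elim (fun v => Sum.elim (fun w => G.Adj v w) (fun p => v = p.1) y)
             (fun p => Sum.elim (fun w => p.1 = w) (fun q => p.1 = q.1 ∧ H.Adj p.2 q.2) y) x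
  symm := by constructor; rintro (v|p) (w|q) h
             · exact h.symm
             · exact h.symm
             · exact h.symm
             · exact ⟨h.1.symm, h.2.symm⟩
  loopless := by constructor; rintro (v|p) h
                 · exact G.loopless.irrefl v h
                 · exact H.loopless.irrefl p.2 h.2

def coronaInlNbr {α β : Type*} (G : SimpleGraph α) (H : SimpleGraph β) (v : α) :
    (coronaProd G H).neighborSet (Sum.inl v) ≃ (G.neighborSet v ⊕ β) where
  toFun x := match x with
    | ⟨Sum.inl w, h⟩ => Sum.inl ⟨w, h⟩
    | ⟨Sum.inr p, _⟩ => Sum.inr p.2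
  invFun y := match y with
    | Sum.inl ⟨w, h⟩ => ⟨Sum.inl w, h⟩
    | Sum.inr b => ⟨Sum.inr (v, b), rfl⟩
  left_inv := by
    rintro ⟨(w | ⟨p1, p2⟩), h⟩
    · rfl
    · have h' : v = p1 := h
      cases h'; rfl
  right_inv := by rintro (⟨w, h⟩ | b) <;> rfl

def coronaInrNbr {α β : Type*} (G : SimpleGraph α) (H : SimpleGraph β) (p : α × β) :
    (coronaProd G H).neighborSet (Sum.inr p) ≃ Option (H.neighborSet p.2) where
  toFun x := match x with
    | ⟨Sum.inl _, _⟩ => none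
    | ⟨Sum.inr q, h⟩ => some ⟨q.2, h.2⟩
  invFun y := match y with
    | none => ⟨Sum.inl p.1, rfl⟩
    | some ⟨w, h⟩ => ⟨Sum.inr (p.1, w), ⟨rfl, h⟩⟩
  left_inv := by
    rintro ⟨(w | ⟨q1, q2⟩), h⟩
    · have h' : p.1 = w := h
      cases h'; rfl
    · have h' : p.1 = q1 := h.1
      cases h'; rfl
  right_inv := by rintro (_ | ⟨w, h⟩) <;> rfl

lemma corona_inl_to_inl {α β : Type*} [Fintype α] [Fintype β]
    (G : SimpleGraph α) (H : SimpleGraph β)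
    (hG : G.Connected) (hK1 : Nontrivial α)
    (f : coronaProd G H ≃g coronaProd G H) :
    ∀ v : α, ∃ w : α, f (Sum.inl v) = Sum.inl w := by
  classical
  intro v
  rcases h : f (Sum.inl v) with w | p
  · exact ⟨w, rfl⟩
  · exfalso
    have hcard : Fintype.card ((coronaProd G H).neighborSet (Sum.inl v))
        = Fintype.card ((coronaProd G H).neighborSet (Sum.inr p)) := by
      have := Fintype.card_congr (f.mapNeighborSet (Sum.inl v))
      rw [h] at this
      exact this
    have h1 : Fintype.card ((coronaProd G H).neighborSet (Sum.inl v))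
        = Fintype.card (G.neighborSet v) + Fintype.card β := by
      rw [Fintype.card_congr (coronaInlNbr G H v), Fintype.card_sum]
    have h2 : Fintype.card ((coronaProd G H).neighborSet (Sum.inr p))
        = Fintype.card (H.neighborSet p.2) + 1 := by
      rw [Fintype.card_congr (coronaInrNbr G H p), Fintype.card_option]
    -- G.neighborSet v is nonempty
    have hnb : 0 < Fintype.card (G.neighborSet v) := by
      obtain ⟨u, hu⟩ := exists_ne v
      obtain ⟨wk⟩ := hG v u
      have : ∃ x, G.Adj v x := by
        cases wk with
        | nil => exact absurd rfl hu.symm  -- v = u contradiction handled below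
        | cons hadj _ => exact ⟨_, hadj⟩
      obtain ⟨x, hx⟩ := this
      exact Fintype.card_pos_iff.mpr ⟨⟨x, hx⟩⟩
    have hH2 : Fintype.card (H.neighborSet p.2) < Fintype.card β := by
      have hnm : p.2 ∉ H.neighborSet p.2 := by simp
      exact Fintype.card_subtype_lt (p := fun x => x ∈ H.neighborSet p.2) hnm
    omega

theorem stmt16 {α β : Type*} [Fintype α] [Fintype β]
    (G : SimpleGraph α) (H : SimpleGraph β)
    (hG : G.Connected) (hH : H.Connected) (hK1 : Nontrivial α)
    (f : coronaProd G H ≃g coronaProd G H) :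
    (∃ g : G ≃g G, ∀ v : α, f (Sum.inl v) = Sum.inl (g v)) ∧
    (∃ σ : Equiv.Perm α, ∀ i : α, ∃ h : H ≃g H,
        ∀ w : β, f (Sum.inr (i, w)) = Sum.inr (σ i, h w)) := by
  classical
  choose gfun hgfun using corona_inl_to_inl G H hG hK1 f
  choose g'fun hg'fun using corona_inl_to_inl G H hG hK1 f.symm
  have hgl : ∀ v, g'fun (gfun v) = v := by
    intro v
    have h2 : f.symm (f (Sum.inl v)) = Sum.inl v := f.symm_apply_apply _
    rw [hgfun v, hg'fun (gfun v)] at h2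
    exact (Sum.inl.inj h2)
  have hgr : ∀ v, gfun (g'fun v) = v := by
    intro v
    have h2 : f (f.symm (Sum.inl v)) = Sum.inl v := f.apply_symm_apply _
    rw [hg'fun v, hgfun (g'fun v)] at h2
    exact (Sum.inl.inj h2)
  have hinr : ∀ p : α × β, ∃ q : α × β, f (Sum.inr p) = Sum.inr q := by
    intro p
    rcases h : f (Sum.inr p) with v | q
    · exfalso
      obtain ⟨w, hw⟩ := corona_inl_to_inl G H hG hK1 f.symm v
      rw [← h, f.symm_apply_apply] at hw
      cases hw
    · exact ⟨q, rfl⟩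
  have hinr' : ∀ p : α × β, ∃ q : α × β, f.symm (Sum.inr p) = Sum.inr q := by
    intro p
    rcases h : f.symm (Sum.inr p) with v | q
    · exfalso
      obtain ⟨w, hw⟩ := corona_inl_to_inl G H hG hK1 f v
      rw [← h, f.apply_symm_apply] at hw
      cases hw
    · exact ⟨q, rfl⟩
  choose qfun hq using hinr
  choose q'fun hq' using hinr'
  have hq1 : ∀ (i : α) (w : β), (qfun (i, w)).1 = gfun i := by
    intro i w
    have hadj : (coronaProd G H).Adj (Sum.inr (i, w)) (Sum.inl i) := rfl
    have := f.map_rel_iff.mpr hadj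
    rw [hq (i, w), hgfun i] at this
    exact this
  have hq'1 : ∀ (j : α) (w : β), (q'fun (j, w)).1 = g'fun j := by
    intro j w
    have hadj : (coronaProd G H).Adj (Sum.inr (j, w)) (Sum.inl j) := rfl
    have := f.symm.map_rel_iff.mpr hadj
    rw [hq' (j, w), hg'fun j] at this
    exact this
  have hpair : ∀ (i : α) (w : β), qfun (i, w) = (gfun i, (qfun (i, w)).2) := by
    intro i w; exact Prod.ext (hq1 i w) rfl
  have hpair' : ∀ (j : α) (w : β), q'fun (j, w) = (g'fun j, (q'fun (j, w)).2) := by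
    intro j w; exact Prod.ext (hq'1 j w) rfl
  refine ⟨⟨⟨⟨gfun, g'fun, hgl, hgr⟩, ?_⟩, hgfun⟩, ⟨gfun, g'fun, hgl, hgr⟩, fun i => ?_⟩
  · intro a b
    have h1 := f.map_rel_iff (a := Sum.inl a) (b := Sum.inl b)
    rw [hgfun a, hgfun b] at h1
    exact h1
  · refine ⟨⟨⟨fun w => (qfun (i, w)).2, fun w => (q'fun (gfun i, w)).2, ?_, ?_⟩, ?_⟩, ?_⟩
    · intro w
      have h3 : f.symm (f (Sum.inr (i, w))) = Sum.inr (i, w) := f.symm_apply_apply _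
      rw [hq (i, w), hpair i w, hq' (gfun i, (qfun (i, w)).2),
        hpair' (gfun i) (qfun (i, w)).2, hgl i] at h3
      exact congrArg Prod.snd (Sum.inr.inj h3)
    · intro w
      have h3 : f (f.symm (Sum.inr (gfun i, w))) = Sum.inr (gfun i, w) := f.apply_symm_apply _
      rw [hq' (gfun i, w), hpair' (gfun i) w, hgl i,
        hq (i, (q'fun (gfun i, w)).2), hpair i (q'fun (gfun i, w)).2] at h3
      exact congrArg Prod.snd (Sum.inr.inj h3)
    · intro a b
      constructor
      · intro h
        have h' : (coronaProd G H).Adj (f (Sum.inr (i, a))) (f (Sum.inr (i, b))) := by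
          rw [hq (i, a), hq (i, b), hpair i a, hpair i b]
          exact ⟨rfl, h⟩
        exact (f.map_rel_iff.mp h').2
      · intro h
        have h' : (coronaProd G H).Adj (f (Sum.inr (i, a))) (f (Sum.inr (i, b))) :=
          f.map_rel_iff.mpr ⟨rfl, h⟩
        rw [hq (i, a), hq (i, b), hpair i a, hpair i b] at h'
        exact h'.2
    · intro w
      rw [hq (i, w), hpair i w]
      rfl
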